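/- Let G = Cₙ ⋉ Cₘ = ⟨a,b ∣ bⁿ = 1, aᵐ = 1, a^b = aʳ⟩ with m odd, gcd(m, n(r−1)) = 1, rⁿ ≡ 1 (mod m), and G non-abelian. If G admits an AI-automorphism then r² ≡ 1 (mod m) and n is even. Conversely, if r² ≡ 1 (mod m) and n is even, the map (a,b) ↦ (a, b⁻¹) extends to an AI-automorphism of G. -/

import Mathlib

private lemma comm_of_gen16 {G : Type*} [Group G] {a b : G}
    (hgen : Subgroup.closure {a, b} = ⊤) (hab : a * b = b * a) (x y : G) :
    x * y = y * x := by
  have hc : ∀ z ∈ ({a, b} : Set G), z ∈ Subgroup.center G := by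
    have hcent : Subgroup.closure ({a, b} : Set G) ≤ Subgroup.centralizer {a, b} := by
      rw [Subgroup.closure_le]
      rintro z hz
      rw [SetLike.mem_coe, Subgroup.mem_centralizer_iff]
      rcases hz with rfl | rfl
      · rintro h hh
        rcases hh with rfl | rfl
        · rfl
        · exact hab.symm
      · rintro h hh
        rcases hh with rfl | rfl
        · exact hab
        · rfl
    intro z hz
    rw [Subgroup.mem_center_iff]
    intro g
    have hg : g ∈ Subgroup.centralizer ({a, b} : Set G) := by
      apply hcent; rw [hgen]; trivial
    exact (Subgroup.mem_centralizer_iff.mp hg z hz).symm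
  have : Subgroup.closure ({a, b} : Set G) ≤ Subgroup.center G := by
    rw [Subgroup.closure_le]; exact hc
  have hx : x ∈ Subgroup.center G := this (by rw [hgen]; trivial)
  exact (Subgroup.mem_center_iff.mp hx y).symm

open scoped commutatorElement

theorem stmt16 (G : Type*) [Group G] (m n r : ℕ)
    (hm : Odd m) (hrm : r < m)
    (hrn : r ^ n ≡ 1 [MOD m]) (hgcd : Nat.gcd m (n * (r - 1)) = 1)
    (a b : G)
    (hgen : Subgroup.closure {a, b} = ⊤)
    (hoa : orderOf a = m) (hob : orderOf b = n)
    (hcard : Nat.card G = m * n)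
    (hconj : b⁻¹ * a * b = a ^ r)
    (hnab : ∃ x y : G, x * y ≠ y * x) :
    ((∃ α : G ≃* G, ∀ g : G, α g * g ∈ commutator G) →
      (r ^ 2 ≡ 1 [MOD m] ∧ Even n)) ∧
    ((r ^ 2 ≡ 1 [MOD m]) → Even n →
      ∃ α : G ≃* G, α a = a ∧ α b = b⁻¹ ∧ ∀ g : G, α g * g ∈ commutator G) := by
  classical
  have habelian : a * b = b * a → False := by
    intro hab
    obtain ⟨x, y, hxy⟩ := hnab
    exact hxy (comm_of_gen16 hgen hab x y)
  -- basic numeric facts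
  have hm1 : m ≠ 1 := by
    intro h
    apply habelian
    have ha1 : a = 1 := orderOf_eq_one_iff.mp (hoa.trans h)
    rw [ha1, one_mul, mul_one]
  have hm0 : m ≠ 0 := by rcases hm with ⟨k, hk⟩; omega
  have hm2 : 2 ≤ m := by omega
  have hn1 : 1 ≤ n := by
    rcases Nat.eq_zero_or_pos n with h | h
    · exfalso; rw [h, zero_mul, Nat.gcd_zero_right] at hgcd; omega
    · exact h
  have hr1 : 1 ≤ r := by
    rcases Nat.eq_zero_or_pos r with h | h
    · exfalso
      rw [h] at hgcd
      simp only [Nat.zero_sub, Nat.mul_zero, Nat.gcd_zero_right] at hgcd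
      omega
    · exact h
  have hcopn : Nat.Coprime m n := Nat.Coprime.coprime_dvd_right (dvd_mul_right n (r - 1)) hgcd
  have hcopk : Nat.Coprime m (r - 1) := Nat.Coprime.coprime_dvd_right (dvd_mul_left (r - 1) n) hgcd
  have hbn : b ^ n = 1 := by rw [← hob]; exact pow_orderOf_eq_one b
  set A := Subgroup.zpowers a with hA
  have haA : a ∈ A := Subgroup.mem_zpowers a
  have hbB : b ∈ Subgroup.zpowers b := Subgroup.mem_zpowers b
  -- conjugation lemmas
  have L2 : ∀ j : ℕ, (b ^ j)⁻¹ * a * b ^ j = a ^ (r ^ j) := by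
    intro j
    induction j with
    | zero => simp
    | succ j ih =>
      have : (b ^ (j+1))⁻¹ * a * b ^ (j+1) = b⁻¹ * ((b ^ j)⁻¹ * a * b ^ j) * b := by
        rw [pow_succ, mul_inv_rev]; group
      rw [this, ih]
      have h2 : b⁻¹ * a ^ (r ^ j) * b = (b⁻¹ * a * b) ^ (r ^ j) := by
        have := (conj_pow (a := b⁻¹) (b := a) (i := r ^ j))
        rw [inv_inv] at this
        exact this.symm
      rw [h2, hconj, ← pow_mul, ← pow_succ']
  have hbn1 : b ^ (n - 1) = b⁻¹ := by
    have h : b ^ (n - 1) * b = 1 := by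
      rw [← pow_succ, Nat.sub_add_cancel hn1, hbn]
    exact eq_inv_of_mul_eq_one_left h
  have L3 : b * a * b⁻¹ = a ^ (r ^ (n - 1)) := by
    have := L2 (n - 1)
    rw [hbn1, inv_inv] at this
    exact this
  have L4 : ∀ s : ℕ, b * a ^ s * b⁻¹ = a ^ (r ^ (n - 1) * s) := by
    intro s
    rw [← conj_pow, L3, ← pow_mul]
  -- A is normal
  have hbnorm : b ∈ Subgroup.normalizer (A : Set G) := by
    rw [Subgroup.mem_normalizer_iff]
    intro h
    constructor
    · rintro ⟨k, rfl⟩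
      rw [← conj_zpow, L3]
      exact Subgroup.zpow_mem _ (Subgroup.pow_mem _ haA _) _
    · rintro ⟨k, hk⟩
      have hk' : a ^ k = b * h * b⁻¹ := hk
      have h1 : h = b⁻¹ * a ^ k * b := by
        rw [hk']; group
      rw [h1]
      have h2 : b⁻¹ * a ^ k * b = (b⁻¹ * a * b) ^ k := by
        have h3 := (conj_zpow (a := b⁻¹) (b := a) (i := k))
        rw [inv_inv] at h3
        exact h3.symm
      rw [h2, hconj]
      exact Subgroup.zpow_mem _ (Subgroup.pow_mem _ haA _) _
  have hAnormal : A.Normal := by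
    rw [← Subgroup.normalizer_eq_top_iff, eq_top_iff, ← hgen, Subgroup.closure_le]
    rintro z hz
    rcases hz with rfl | rfl
    · exact Subgroup.le_normalizer haA
    · exact hbnorm
  haveI := hAnormal
  -- commutator G = A
  have hcommA : commutator G = A := by
    apply le_antisymm
    · rw [commutator_def, Subgroup.commutator_le]
      intro g _ h _
      have hq : ∀ q : G ⧸ A, q ∈ Subgroup.zpowers ((b : G) : G ⧸ A) := by
        have htop : Subgroup.zpowers ((QuotientGroup.mk' A) b) = ⊤ := by
          rw [eq_top_iff, ← Subgroup.map_top_of_surjective _ (QuotientGroup.mk'_surjective A),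
            ← hgen, MonoidHom.map_closure, Subgroup.zpowers_eq_closure]
          apply Subgroup.closure_le _ |>.mpr
          rintro z ⟨w, hw, rfl⟩
          rcases hw with rfl | rfl
          · have : (QuotientGroup.mk' A) w = 1 := (QuotientGroup.eq_one_iff w).mpr haA
            rw [this]
            exact SetLike.mem_coe.mpr (one_mem _)
          · exact SetLike.mem_coe.mpr (Subgroup.subset_closure rfl)
        intro q
        rw [show ((b : G) : G ⧸ A) = (QuotientGroup.mk' A) b from rfl, htop]
        trivial
      have h1 : ((⁅g, h⁆ : G) : G ⧸ A) = 1 := by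
        rw [show ((⁅g, h⁆ : G) : G ⧸ A) = (QuotientGroup.mk' A) ⁅g, h⁆ from rfl,
          map_commutatorElement]
        rw [commutatorElement_eq_one_iff_commute]
        obtain ⟨k1, hk1⟩ := Subgroup.mem_zpowers_iff.mp (hq ((QuotientGroup.mk' A) g))
        obtain ⟨k2, hk2⟩ := Subgroup.mem_zpowers_iff.mp (hq ((QuotientGroup.mk' A) h))
        rw [← hk1, ← hk2]
        exact (Commute.refl _).zpow_zpow k1 k2
      exact (QuotientGroup.eq_one_iff _).mp h1
    · rw [hA, Subgroup.zpowers_le]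
      have hmem : a ^ (r - 1) ∈ commutator G := by
        have h1 : ⁅b⁻¹, a⁆ ∈ commutator G := by
          rw [commutator_def]
          exact Subgroup.commutator_mem_commutator (Subgroup.mem_top _) (Subgroup.mem_top _)
        have h2 : ⁅b⁻¹, a⁆ = a ^ (r - 1) := by
          rw [commutatorElement_def, inv_inv]
          rw [show b⁻¹ * a * b * a⁻¹ = (b⁻¹ * a * b) * a⁻¹ from rfl, hconj]
          have h4 : a ^ r = a ^ (r - 1) * a := by
            rw [← pow_succ, Nat.sub_add_cancel hr1]
          rw [h4, mul_assoc, mul_inv_cancel, mul_one]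
        rwa [h2] at h1
      obtain ⟨u, -, hu⟩ := Nat.exists_mul_mod_eq_one_of_coprime hcopk.symm (by omega)
      have ha : a = (a ^ (r - 1)) ^ u := by
        rw [← pow_mul]
        have : a ^ ((r-1) * u) = a ^ 1 := by
          rw [pow_eq_pow_iff_modEq, hoa]
          show (r-1) * u % m = 1 % m
          rw [hu, Nat.mod_eq_of_lt (by omega)]
        rw [this, pow_one]
      rw [ha]
      exact pow_mem hmem u
  haveI hfin : Finite G := Nat.finite_of_card_ne_zero (by rw [hcard]; positivity)
  constructor
  · -- Direction 1
    rintro ⟨α, hα⟩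
    have hαa : α a ∈ A := by
      have h1 : α a * a ∈ A := hcommA ▸ hα a
      have h2 := mul_mem h1 (inv_mem haA)
      rwa [mul_assoc, mul_inv_cancel, mul_one] at h2
    obtain ⟨s, hs⟩ := (Submonoid.mem_powers_iff _ _).mp (mem_powers_iff_mem_zpowers.mpr hαa)
    have hαbA : α b * b ∈ A := hcommA ▸ hα b
    obtain ⟨v, hv⟩ := (Submonoid.mem_powers_iff _ _).mp (mem_powers_iff_mem_zpowers.mpr hαbA)
    have hαb : α b = a ^ v * b⁻¹ := by rw [hv]; group
    have hsgcd : Nat.gcd m s = 1 := by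
      have h1 : orderOf (α a) = m := by
        rw [← hoa]
        exact orderOf_injective α.toMonoidHom α.injective a
      rw [← hs, orderOf_pow, hoa] at h1
      have h2 := Nat.div_eq_self.mp h1
      rcases h2 with h | h
      · omega
      · exact h
    have h2 : (α b)⁻¹ * α a * α b = (α a) ^ r := by
      have := congrArg α hconj
      rwa [map_mul, map_mul, map_inv, map_pow] at this
    rw [hαb, ← hs] at h2
    have hcomm_pows : ∀ i j : ℕ, a ^ i * a ^ j = a ^ j * a ^ i := by
      intro i j; rw [← pow_add, ← pow_add, Nat.add_comm]
    have h3 : (a ^ v * b⁻¹)⁻¹ * a ^ s * (a ^ v * b⁻¹) = b * a ^ s * b⁻¹ := by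
      rw [mul_inv_rev, inv_inv]
      have : b * (a ^ v)⁻¹ * a ^ s * (a ^ v * b⁻¹) = b * ((a ^ v)⁻¹ * a ^ s * a ^ v) * b⁻¹ := by
        group
      rw [this]
      congr 1
      congr 1
      rw [mul_assoc, hcomm_pows s v, ← mul_assoc, inv_mul_cancel, one_mul]
    rw [h3, L4, ← pow_mul] at h2
    have h4 : r ^ (n - 1) * s ≡ s * r [MOD m] := by
      rw [← hoa]
      exact pow_eq_pow_iff_modEq.mp h2
    have h5 : r ^ (n - 1) ≡ r [MOD m] := by
      apply Nat.ModEq.cancel_right_of_coprime hsgcd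
      calc r ^ (n-1) * s ≡ s * r [MOD m] := h4
        _ = r * s := Nat.mul_comm s r
    have hr2 : r ^ 2 ≡ 1 [MOD m] := by
      have h6 : r ^ n ≡ r * r [MOD m] := by
        have := h5.mul_right r
        rwa [← pow_succ, Nat.sub_add_cancel hn1] at this
      calc r ^ 2 = r * r := sq r
        _ ≡ r ^ n [MOD m] := h6.symm
        _ ≡ 1 [MOD m] := hrn
    refine ⟨hr2, ?_⟩
    by_contra hodd
    obtain ⟨k, hk⟩ := Nat.not_even_iff_odd.mp hodd
    have h7 : r ^ (n - 1) ≡ 1 [MOD m] := by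
      have heq : r ^ (n - 1) = (r ^ 2) ^ k := by
        rw [← pow_mul]; congr 1; omega
      rw [heq]
      calc (r ^ 2) ^ k ≡ 1 ^ k [MOD m] := hr2.pow k
        _ = 1 := one_pow k
    have h8 : r ≡ 1 [MOD m] := by
      have h9 := h7.mul_right r
      rw [← pow_succ, Nat.sub_add_cancel hn1, one_mul] at h9
      exact h9.symm.trans hrn
    have hreq : r = 1 := by
      have : r % m = 1 % m := h8
      rwa [Nat.mod_eq_of_lt hrm, Nat.mod_eq_of_lt (by omega)] at this
    apply habelian
    have h10 : b⁻¹ * a * b = a := by rw [hconj, hreq, pow_one]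
    calc a * b = b * (b⁻¹ * a * b) := by group
      _ = b * a := by rw [h10]
  · -- Direction 2
    intro hr2 _
    set B := Subgroup.zpowers b with hB
    have hcompl : A.IsComplement' B := by
      apply Subgroup.isComplement'_of_coprime
      · rw [hA, hB, Nat.card_zpowers, Nat.card_zpowers, hoa, hob, hcard]
      · rw [hA, hB, Nat.card_zpowers, Nat.card_zpowers, hoa, hob]
        exact hcopn
    have hexu : ∀ g : G, ∃! p : ↥(A : Set G) × ↥(B : Set G), (p.1 : G) * (p.2 : G) = g :=
      fun g => hcompl.existsUnique g
    choose d hd using fun g => (hexu g).exists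
    have huniq : ∀ (g : G) (x : ↥(A : Set G)) (y : ↥(B : Set G)), (x : G) * y = g →
        (d g).1 = x ∧ (d g).2 = y := by
      intro g x y h
      have h2 : d g = (x, y) := (hexu g).unique (hd g)
        (show ((((x, y) : ↥(A : Set G) × ↥(B : Set G)).1 : G) * (((x, y) : ↥(A : Set G) × ↥(B : Set G)).2 : G) = g) from h)
      exact ⟨congrArg Prod.fst h2, congrArg Prod.snd h2⟩
    -- b^2 commutes with a
    have hb2a : Commute (b ^ (2:ℤ)) a := by
      have h1 : (b ^ 2)⁻¹ * a * b ^ 2 = a := by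
        have h2 := L2 2
        have h3 : a ^ (r ^ 2) = a ^ 1 := by
          rw [pow_eq_pow_iff_modEq, hoa]; exact hr2
        rw [h3, pow_one] at h2
        exact h2
      have h4 : b ^ 2 * a = a * b ^ 2 := by
        conv_lhs => rw [← h1]
        group
      show b ^ (2:ℤ) * a = a * b ^ (2:ℤ)
      rw [show b ^ (2:ℤ) = b ^ (2:ℕ) by norm_cast]
      exact h4
    have hswap : ∀ (x y : G), x ∈ A → y ∈ B → y * x * y⁻¹ = y⁻¹ * x * y := by
      intro x y hx hy
      obtain ⟨k, hk⟩ := Subgroup.mem_zpowers_iff.mp hx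
      obtain ⟨t, ht⟩ := Subgroup.mem_zpowers_iff.mp hy
      have hc : Commute (y ^ (2:ℤ)) x := by
        rw [← hk, ← ht]
        have h1 : (b ^ t) ^ (2:ℤ) = (b ^ (2:ℤ)) ^ t := by
          rw [← zpow_mul, ← zpow_mul, mul_comm]
        rw [h1]
        exact (hb2a.zpow_left t).zpow_right k
      have hc2 : y ^ (2:ℤ) * x = x * y ^ (2:ℤ) := hc
      have hy2 : y ^ (2:ℤ) = y * y := by
        rw [show (2:ℤ) = 1 + 1 from rfl, zpow_add, zpow_one]
      rw [hy2] at hc2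
      calc y * x * y⁻¹ = y⁻¹ * (y * y * x) * y⁻¹ := by group
        _ = y⁻¹ * (x * (y * y)) * y⁻¹ := by rw [hc2]
        _ = y⁻¹ * x * y := by group
    have hBcomm : ∀ (y1 y2 : G), y1 ∈ B → y2 ∈ B → y1 * y2 = y2 * y1 := by
      intro y1 y2 h1 h2
      obtain ⟨k1, hk1⟩ := Subgroup.mem_zpowers_iff.mp h1
      obtain ⟨k2, hk2⟩ := Subgroup.mem_zpowers_iff.mp h2
      rw [← hk1, ← hk2, ← zpow_add, ← zpow_add, add_comm]
    set f : G → G := fun g => ((d g).1 : G) * ((d g).2 : G)⁻¹ with hf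
    have hmemA : ∀ g : G, ((d g).1 : G) ∈ A := fun g => (d g).1.2
    have hmemB : ∀ g : G, ((d g).2 : G) ∈ B := fun g => (d g).2.2
    have hfmul : ∀ g h : G, f (g * h) = f g * f h := by
      intro g h
      have hg' := hd g
      have hh' := hd h
      set x1 : G := ((d g).1 : G) with hx1
      set y1 : G := ((d g).2 : G) with hy1
      set x2 : G := ((d h).1 : G) with hx2
      set y2 : G := ((d h).2 : G) with hy2
      have hx1A : x1 ∈ A := hmemA g
      have hy1B : y1 ∈ B := hmemB g
      have hx2A : x2 ∈ A := hmemA h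
      have hy2B : y2 ∈ B := hmemB h
      have hconjA : y1 * x2 * y1⁻¹ ∈ A := hAnormal.conj_mem x2 hx2A y1
      have hx3A : x1 * (y1 * x2 * y1⁻¹) ∈ A := mul_mem hx1A hconjA
      have hy3B : y1 * y2 ∈ B := mul_mem hy1B hy2B
      have hgh : ((⟨x1 * (y1 * x2 * y1⁻¹), hx3A⟩ : ↥(A : Set G)) : G) *
          ((⟨y1 * y2, hy3B⟩ : ↥(B : Set G)) : G) = g * h := by
        show x1 * (y1 * x2 * y1⁻¹) * (y1 * y2) = g * h
        rw [← hg', ← hh']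
        group
      obtain ⟨he1, he2⟩ := huniq (g * h) _ _ hgh
      show ((d (g*h)).1 : G) * ((d (g*h)).2 : G)⁻¹ = (x1 * y1⁻¹) * (x2 * y2⁻¹)
      rw [he1, he2]
      show x1 * (y1 * x2 * y1⁻¹) * (y1 * y2)⁻¹ = (x1 * y1⁻¹) * (x2 * y2⁻¹)
      rw [hswap x2 y1 hx2A hy1B]
      have hcy : y1 * y2 = y2 * y1 := hBcomm y1 y2 hy1B hy2B
      rw [show (y1 * y2)⁻¹ = y2⁻¹ * y1⁻¹ from mul_inv_rev y1 y2]
      have : y1 * (y2⁻¹ * y1⁻¹) = y2⁻¹ := by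
        have h5 : y1 * y2⁻¹ = y2⁻¹ * y1 := (show Commute y1 y2 from hcy).inv_right.eq
        rw [← mul_assoc, h5]
        group
      calc x1 * (y1⁻¹ * x2 * y1) * (y2⁻¹ * y1⁻¹)
          = x1 * y1⁻¹ * x2 * (y1 * (y2⁻¹ * y1⁻¹)) := by group
        _ = x1 * y1⁻¹ * x2 * y2⁻¹ := by rw [this]
        _ = (x1 * y1⁻¹) * (x2 * y2⁻¹) := by group
    have hdec : ∀ (x : ↥(A : Set G)) (y : ↥(B : Set G)),
        (d ((x : G) * (y : G))).1 = x ∧ (d ((x : G) * (y : G))).2 = y :=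
      fun x y => huniq _ x y rfl
    have hff : ∀ g : G, f (f g) = g := by
      intro g
      have hinvB : ((d g).2 : G)⁻¹ ∈ B := inv_mem (hmemB g)
      have h1 := hdec (d g).1 ⟨((d g).2 : G)⁻¹, hinvB⟩
      show ((d (f g)).1 : G) * ((d (f g)).2 : G)⁻¹ = g
      have hfg : f g = ((d g).1 : G) * ((⟨((d g).2 : G)⁻¹, hinvB⟩ : ↥(B : Set G)) : G) := rfl
      rw [hfg] at *
      rw [h1.1, h1.2]
      show ((d g).1 : G) * (((d g).2 : G)⁻¹)⁻¹ = g
      rw [inv_inv]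
      exact hd g
    refine ⟨MulEquiv.mk' ⟨f, f, hff, hff⟩ (fun x y => hfmul x y), ?_, ?_, ?_⟩
    · show f a = a
      have h1 := huniq a ⟨a, haA⟩ ⟨1, one_mem B⟩ (by simp)
      show ((d a).1 : G) * ((d a).2 : G)⁻¹ = a
      rw [h1.1, h1.2]
      simp
    · show f b = b⁻¹
      have h1 := huniq b ⟨1, one_mem A⟩ ⟨b, hbB⟩ (by simp)
      show ((d b).1 : G) * ((d b).2 : G)⁻¹ = b⁻¹
      rw [h1.1, h1.2]
      simp
    · intro g
      show f g * g ∈ commutator G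
      rw [hcommA]
      have h9 : f g * g = (((d g).1 : G) * ((d g).2 : G)⁻¹) * (((d g).1 : G) * ((d g).2 : G)) := by
        show (((d g).1 : G) * ((d g).2 : G)⁻¹) * g = _
        rw [hd g]
      have h10 : (((d g).1 : G) * ((d g).2 : G)⁻¹) * (((d g).1 : G) * ((d g).2 : G)) =
          ((d g).1 : G) * (((d g).2 : G)⁻¹ * ((d g).1 : G) * (((d g).2 : G)⁻¹)⁻¹) := by
        group
      rw [h9, h10]
      exact mul_mem (hmemA g) (hAnormal.conj_mem _ (hmemA g) _)
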